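/- If every term of minimal type that is strongly normalizing is computable, all components s₁,…,sₙ are computable, and f(s⃗) ⊳_acc v, then v is computable. -/
import Mathlib


/-- Algebraic terms: variables and function symbols applied to lists of terms. -/
inductive Trm (V F : Type) : Type
  | var : V → Trm V F
  | fn : F → List (Trm V F) → Trm V F

/-- `Accin AccP u s` : `u` is accessible in `s`. -/
inductive Accin {V F : Type} (AccP : F → Set ℕ) : Trm V F → Trm V F → Prop
  | base {f l i u} : i ∈ AccP f → l[i]? = some u → Accin AccP u (.fn f l)
  | step {f l i s u} : i ∈ AccP f → l[i]? = some s → Accin AccP u s →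
      Accin AccP u (.fn f l)

/-- `StrictSub u s` : `u` is a strict subterm of `s`. -/
inductive StrictSub {V F : Type} : Trm V F → Trm V F → Prop
  | mem {f l t} : t ∈ l → StrictSub t (.fn f l)
  | trans {f l t u} : StrictSub u t → t ∈ l → StrictSub u (.fn f l)

/-- `FreeIn x t` : the variable `x` occurs (free) in `t`. -/
inductive FreeIn {V F : Type} : V → Trm V F → Prop
  | var {x} : FreeIn x (.var x)
  | fn {x f l t} : t ∈ l → FreeIn x t → FreeIn x (.fn f l)

theorem stmt15 {V F : Type} (AccP : F → Set ℕ)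
    (minTy : Trm V F → Prop)                -- "has minimal type"
    (SN Computable : Trm V F → Prop)
    -- strongly normalizing terms of minimal type are computable
    (hmin : ∀ v, minTy v → SN v → Computable v)
    -- computable terms are strongly normalizing
    (hCompSN : ∀ t, Computable t → SN t)
    -- strict subterms of strongly normalizing terms are strongly normalizing
    (hSNsub : ∀ u t, StrictSub u t → SN t → SN u)
    -- computability is closed under the accessibility clauses
    (hstep : ∀ f l, Computable (Trm.fn f l) →
      ∀ i ∈ AccP f, ∀ u, l[i]? = some u → Computable u) :
    ∀ (f : F) (l : List (Trm V F)) (v : Trm V F),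
      (∀ s ∈ l, Computable s) →
      -- f(s⃗) ⊳_acc v
      (Accin AccP v (Trm.fn f l) ∨
        (StrictSub v (Trm.fn f l) ∧ minTy v ∧
          ∀ x, FreeIn x v → FreeIn x (Trm.fn f l))) →
      Computable v := by
  intro f l v hl h
  -- auxiliary: Accin from a computable term gives computable
  have aux : ∀ u s, Accin AccP u s → Computable s → Computable u := by
    intro u s h
    induction h with
    | base hi hu => intro hc; exact hstep _ _ hc _ hi _ hu
    | step hi hs _ ih => intro hc; exact ih (hstep _ _ hc _ hi _ hs)
  rcases h with h | ⟨hsub, hty, -⟩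
  · cases h with
    | base hi hu =>
        exact hl _ (List.mem_of_getElem? hu)
    | step hi hs hacc =>
        exact aux _ _ hacc (hl _ (List.mem_of_getElem? hs))
  · apply hmin _ hty
    cases hsub with
    | mem ht => exact hCompSN _ (hl _ ht)
    | trans hst ht => exact hSNsub _ _ hst (hCompSN _ (hl _ ht))
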